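/- If a graph G has n vertices and m ≥ 12n edges, then G contains an induced subgraph H with at least m³/(32n⁴) edges whose diameter is at most 3. -/

import Mathlib

open scoped Classical
open Finset

set_option linter.unusedSectionVars false

namespace Stmt2Aux

variable {V : Type*} [Fintype V] [DecidableEq V]

/-- adjacency indicator -/
def A (G : SimpleGraph V) [DecidableRel G.Adj] (u v : V) : ℝ :=
  if G.Adj u v then 1 else 0

variable (G : SimpleGraph V) [DecidableRel G.Adj]

lemma A_symm (u v : V) : A G u v = A G v u := by
  simp [A, SimpleGraph.adj_comm]

lemma A_nonneg (u v : V) : 0 ≤ A G u v := by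
  unfold A; split <;> norm_num

lemma A_le_one (u v : V) : A G u v ≤ 1 := by
  unfold A; split <;> norm_num

lemma sum_A (u : V) : ∑ v, A G u v = G.degree u := by
  simp [A, Finset.sum_boole, SimpleGraph.degree, SimpleGraph.neighborFinset_eq_filter]

lemma sum_sum_A : ∑ u, ∑ v, A G u v = 2 * G.edgeFinset.card := by
  simp_rw [sum_A]
  rw [← Nat.cast_sum, SimpleGraph.sum_degrees_eq_twice_card_edges]
  push_cast; ring

/-- weighted count of (ordered) pairs (x,y) with xy an edge, x ∈ N(u), y ∈ N(w) -/
def qR (G : SimpleGraph V) [DecidableRel G.Adj] (u w : V) : ℝ :=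
  ∑ x, ∑ y, A G u x * A G w y * A G x y

def cR (G : SimpleGraph V) [DecidableRel G.Adj] (w x : V) : ℝ :=
  ∑ z, A G w z * A G z x

/-- homomorphism count of the 4-cycle -/
def pR (G : SimpleGraph V) [DecidableRel G.Adj] : ℝ :=
  ∑ u, ∑ w, A G u w * qR G u w

lemma qR_nonneg (u w : V) : 0 ≤ qR G u w :=
  Finset.sum_nonneg fun _ _ => Finset.sum_nonneg fun _ _ =>
    mul_nonneg (mul_nonneg (A_nonneg G _ _) (A_nonneg G _ _)) (A_nonneg G _ _)

lemma pR_eq : pR G = ∑ w, ∑ x, (cR G w x) ^ 2 := by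
  unfold pR qR cR
  simp_rw [Finset.mul_sum]
  rw [Finset.sum_comm]
  refine Finset.sum_congr rfl fun w _ => ?_
  rw [Finset.sum_comm]
  refine Finset.sum_congr rfl fun x _ => ?_
  rw [sq, Finset.sum_mul_sum]
  refine Finset.sum_congr rfl fun u _ => Finset.sum_congr rfl fun y _ => ?_
  rw [A_symm G u w, A_symm G u x, A_symm G x y]
  ring

lemma sum_cR : ∑ w, ∑ x, cR G w x = ∑ z, (∑ v, A G z v) ^ 2 := by
  unfold cR
  have h1 : ∀ w : V, ∑ x : V, ∑ z : V, A G w z * A G z x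
      = ∑ z : V, ∑ x : V, A G w z * A G z x := fun w => Finset.sum_comm
  simp_rw [h1]
  rw [Finset.sum_comm]
  refine Finset.sum_congr rfl fun z _ => ?_
  rw [sq, Finset.sum_mul_sum]
  refine Finset.sum_congr rfl fun w _ => ?_
  rw [← Finset.mul_sum, ← Finset.mul_sum, A_symm G w z]

lemma cs2 : (∑ w, ∑ x, cR G w x) ^ 2 ≤ (Fintype.card V : ℝ)^2 * ∑ w, ∑ x, (cR G w x)^2 := by
  have h := sq_sum_le_card_mul_sum_sq (s := (univ ×ˢ univ : Finset (V × V)))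
    (f := fun p => cR G p.1 p.2)
  rw [Finset.sum_product (s := (univ : Finset V)), Finset.sum_product (s := (univ : Finset V))] at h
  calc (∑ w : V, ∑ x : V, cR G w x) ^ 2
      ≤ ((univ ×ˢ univ : Finset (V × V)).card : ℝ) * ∑ w : V, ∑ x : V, (cR G w x)^2 := h
    _ = (Fintype.card V : ℝ)^2 * ∑ w, ∑ x, (cR G w x)^2 := by simp [sq]

lemma cs1 : (∑ z : V, ∑ v, A G z v) ^ 2 ≤ (Fintype.card V : ℝ) * ∑ z : V, (∑ v, A G z v) ^ 2 := by
  have h := sq_sum_le_card_mul_sum_sq (s := (univ : Finset V)) (f := fun z => ∑ v, A G z v)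
  simpa using h

/-- main counting inequality: 16 m⁴ ≤ n⁴ · (number of C₄-homomorphisms) -/
lemma pR_lower : 16 * (G.edgeFinset.card : ℝ)^4 ≤ (Fintype.card V : ℝ)^4 * pR G := by
  set N : ℝ := (Fintype.card V : ℝ) with hN
  set M : ℝ := (G.edgeFinset.card : ℝ) with hM
  have hN0 : 0 ≤ N := by positivity
  set D : ℝ := ∑ z : V, (∑ v, A G z v) ^ 2 with hD
  have hD0 : 0 ≤ D := Finset.sum_nonneg fun _ _ => sq_nonneg _
  have f1 : (2*M)^2 ≤ N * D := by
    have := cs1 G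
    rw [sum_sum_A] at this
    exact this
  have f2 : D^2 ≤ N^2 * pR G := by
    have := cs2 G
    rw [sum_cR, ← pR_eq] at this
    exact this
  have f3 : ((2*M)^2)^2 ≤ (N*D)^2 := by
    have h0 : 0 ≤ (2*M)^2 := sq_nonneg _
    exact pow_le_pow_left₀ h0 f1 2
  have f4 : (N*D)^2 ≤ N^2 * (N^2 * pR G) := by
    rw [mul_pow]
    have : 0 ≤ N^2 := sq_nonneg _
    exact mul_le_mul_of_nonneg_left f2 this
  nlinarith [f3, f4]

def restrict (G : SimpleGraph V) (s : Finset V) : SimpleGraph V where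
  Adj a b := a ∈ s ∧ b ∈ s ∧ G.Adj a b
  symm := ⟨by rintro a b ⟨ha, hb, hab⟩; exact ⟨hb, ha, hab.symm⟩⟩
  loopless := ⟨by rintro a ⟨_, _, h⟩; exact G.irrefl h⟩

instance (s : Finset V) : DecidableRel (restrict G s).Adj := fun a b =>
  inferInstanceAs (Decidable (a ∈ s ∧ b ∈ s ∧ G.Adj a b))

lemma restrict_edgeFinset (s : Finset V) :
    (restrict G s).edgeFinset = G.edgeFinset.filter (fun e => ∀ x ∈ e, x ∈ s) := by
  ext e
  refine Sym2.ind (fun a b => ?_) e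
  rw [SimpleGraph.mem_edgeFinset]
  simp [SimpleGraph.mem_edgeFinset, restrict, Sym2.forall_mem_pair]
  tauto

lemma sum_in_restrict (s : Finset V) :
    ∑ x ∈ s, ∑ y ∈ s, A G x y
      = 2 * ((G.edgeFinset.filter (fun e => ∀ x ∈ e, x ∈ s)).card : ℝ) := by
  rw [← restrict_edgeFinset, ← sum_sum_A (restrict G s)]
  rw [← Finset.sum_subset (Finset.subset_univ s)
      (fun x _ hx => by simp [A, restrict, hx] :
        ∀ x ∈ (univ : Finset V), x ∉ s → (∑ y, A (restrict G s) x y) = 0)]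
  refine Finset.sum_congr rfl fun x hx => ?_
  rw [← Finset.sum_subset (Finset.subset_univ s)
      (fun y _ hy => by simp [A, restrict, hy] :
        ∀ y ∈ (univ : Finset V), y ∉ s → A (restrict G s) x y = 0)]
  refine Finset.sum_congr rfl fun y hy => ?_
  simp only [A, restrict]
  by_cases h : G.Adj x y <;> simp [h, hx, hy]

/-- key bound: qR u w ≤ twice number of edges inside N(u) ∪ N(w) -/
lemma qR_le (u w : V) :
    qR G u w ≤ 2 * ((G.edgeFinset.filter
      (fun e => ∀ x ∈ e, x ∈ G.neighborFinset u ∪ G.neighborFinset w)).card : ℝ) := by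
  set s : Finset V := G.neighborFinset u ∪ G.neighborFinset w with hs
  rw [← sum_in_restrict]
  have key : ∀ x y : V, A G u x * A G w y * A G x y
      ≤ (if x ∈ s then (1:ℝ) else 0) * ((if y ∈ s then (1:ℝ) else 0) * A G x y) := by
    intro x y
    have hx : A G u x ≤ (if x ∈ s then (1:ℝ) else 0) := by
      unfold A
      split_ifs with h1 h2
      · norm_num
      · exact absurd (Finset.mem_union_left _ ((G.mem_neighborFinset u x).2 h1)) h2
      · norm_num
      · norm_num
    have hy : A G w y ≤ (if y ∈ s then (1:ℝ) else 0) := by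
      unfold A
      split_ifs with h1 h2
      · norm_num
      · exact absurd (Finset.mem_union_right _ ((G.mem_neighborFinset w y).2 h1)) h2
      · norm_num
      · norm_num
    have hx0 : (0:ℝ) ≤ (if x ∈ s then (1:ℝ) else 0) := by split <;> norm_num
    have hy0 : (0:ℝ) ≤ (if y ∈ s then (1:ℝ) else 0) := by split <;> norm_num
    calc A G u x * A G w y * A G x y
        = A G u x * (A G w y * A G x y) := by ring
      _ ≤ (if x ∈ s then (1:ℝ) else 0) * ((if y ∈ s then (1:ℝ) else 0) * A G x y) := by
          apply mul_le_mul hx _ (mul_nonneg (A_nonneg G w y) (A_nonneg G x y)) hx0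
          exact mul_le_mul_of_nonneg_right hy (A_nonneg G x y)
  calc qR G u w ≤ ∑ x, ∑ y, (if x ∈ s then (1:ℝ) else 0) * ((if y ∈ s then (1:ℝ) else 0) * A G x y) := by
        unfold qR
        exact Finset.sum_le_sum fun x _ => Finset.sum_le_sum fun y _ => key x y
    _ = ∑ x ∈ s, ∑ y ∈ s, A G x y := by
        simp_rw [← Finset.mul_sum, ite_mul, one_mul, zero_mul, Finset.sum_ite_mem, Finset.univ_inter]

end Stmt2Aux

open Stmt2Aux

/-- If a graph G has n vertices and m ≥ 12n edges, then G contains an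
induced subgraph H with at least m³/(32n⁴) edges whose diameter is at most 3. -/
theorem stmt_2 {V : Type*} [Fintype V] [DecidableEq V] (G : SimpleGraph V)
    [DecidableRel G.Adj] (n m : ℕ) (hn : n = Fintype.card V)
    (hm : m = G.edgeFinset.card) (h : 12 * n ≤ m) :
    ∃ s : Finset V,
      (m : ℝ) ^ 3 / (32 * (n : ℝ) ^ 4) ≤
        ((G.edgeFinset.filter (fun e => ∀ x ∈ e, x ∈ s)).card : ℝ) ∧
      ∀ a b : (s : Set V), (G.induce (s : Set V)).edist a b ≤ 3 := by
  by_cases hV : IsEmpty V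
  · refine ⟨∅, ?_, ?_⟩
    · have : G.edgeFinset = ∅ := by
        apply Finset.eq_empty_of_forall_notMem
        intro e he
        exact Sym2.ind (fun a b _ => hV.false a) e he
      have hm0 : m = 0 := by rw [hm, this]; simp
      rw [hm0]
      simp
    · intro a b
      exact hV.elim a.1
  · rw [not_isEmpty_iff] at hV
    have hn1 : 1 ≤ n := by
      rw [hn]
      exact Fintype.card_pos
    have hm1 : 1 ≤ m := le_trans (by omega) h
    set N : ℝ := (n : ℝ) with hNdef
    set M : ℝ := (m : ℝ) with hMdef
    have hN0 : (0:ℝ) < N := by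
      rw [hNdef]
      exact_mod_cast Nat.lt_of_lt_of_le Nat.zero_lt_one hn1
    have hM0 : (0:ℝ) < M := by
      rw [hMdef]
      exact_mod_cast Nat.lt_of_lt_of_le Nat.zero_lt_one hm1
    have hP : 16 * M^4 ≤ N^4 * pR G := by
      rw [hMdef, hNdef, hm, hn]
      exact pR_lower G
    have hAdjEx : ∃ u w : V, G.Adj u w := by
      have hne : G.edgeFinset.Nonempty := by
        apply Finset.card_pos.mp
        omega
      obtain ⟨e, he⟩ := hne
      revert he
      refine Sym2.ind (fun a b hab => ⟨a, b, ?_⟩) e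
      rwa [SimpleGraph.mem_edgeFinset] at hab
    obtain ⟨u₀, w₀, h₀⟩ := hAdjEx
    have hsumA : ∑ p ∈ (univ ×ˢ univ : Finset (V × V)), A G p.1 p.2 = 2 * M := by
      rw [Finset.sum_product (s := (univ : Finset V)), sum_sum_A, hMdef, hm]
    have hedge : ∃ u w : V, G.Adj u w ∧ 8 * M^3 / N^4 ≤ qR G u w := by
      by_contra hc
      push_neg at hc
      have hlt : pR G < ∑ p ∈ (univ ×ˢ univ : Finset (V × V)), A G p.1 p.2 * (8 * M^3 / N^4) := by
        have hpr : pR G = ∑ p ∈ (univ ×ˢ univ : Finset (V × V)), A G p.1 p.2 * qR G p.1 p.2 := by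
          rw [Finset.sum_product (s := (univ : Finset V))]
          rfl
        rw [hpr]
        apply Finset.sum_lt_sum
        · rintro ⟨u, w⟩ _
          by_cases hadj : G.Adj u w
          · simp only [A, if_pos hadj, one_mul]
            exact le_of_lt (hc u w hadj)
          · simp [A, if_neg hadj]
        · refine ⟨(u₀, w₀), Finset.mem_univ _, ?_⟩
          simp only [A, if_pos h₀, one_mul]
          exact hc u₀ w₀ h₀
      rw [← Finset.sum_mul, hsumA] at hlt
      have h16 : 2 * M * (8 * M^3 / N^4) = 16 * M^4 / N^4 := by ring
      rw [h16] at hlt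
      have : 16 * M^4 / N^4 ≤ pR G := by
        rw [div_le_iff₀ (by positivity)]
        linarith [hP]
      exact absurd (lt_of_lt_of_le hlt this) (lt_irrefl _)
    obtain ⟨u, w, huw, hq⟩ := hedge
    set s : Finset V := G.neighborFinset u ∪ G.neighborFinset w with hsdef
    refine ⟨s, ?_, ?_⟩
    · -- edge count
      have h2E := qR_le G u w
      rw [← hsdef] at h2E
      have hr : (0:ℝ) ≤ M^3 / N^4 := by positivity
      have heq1 : M^3 / (32 * N^4) = (M^3 / N^4) / 32 := by ring
      have heq2 : (8:ℝ) * M^3 / N^4 = 8 * (M^3 / N^4) := by ring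
      rw [hMdef, hNdef] at heq1 hr heq2 ⊢
      rw [heq1]
      rw [heq2] at hq
      linarith [le_trans hq h2E]
    · -- diameter
      intro a b
      have hs : ∀ c : V, c ∈ (s : Set V) → G.Adj u c ∨ G.Adj w c := by
        intro c hc
        rcases Finset.mem_union.1 (Finset.mem_coe.1 hc) with hc' | hc'
        · exact Or.inl ((G.mem_neighborFinset u c).1 hc')
        · exact Or.inr ((G.mem_neighborFinset w c).1 hc')
      have hu : u ∈ (s : Set V) :=
        Finset.mem_coe.2 (Finset.mem_union_right _ ((G.mem_neighborFinset w u).2 huw.symm))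
      have hw : w ∈ (s : Set V) :=
        Finset.mem_coe.2 (Finset.mem_union_left _ ((G.mem_neighborFinset u w).2 huw))
      set pu : (s : Set V) := ⟨u, hu⟩ with hpudef
      set pw : (s : Set V) := ⟨w, hw⟩ with hpwdef
      have hadj : ∀ (p q : (s : Set V)), G.Adj p.1 q.1 →
          (G.induce (s : Set V)).edist p q ≤ 1 := by
        intro p q hpq
        have hind : (G.induce (s : Set V)).Adj p q := by
          simp only [SimpleGraph.comap_adj, Function.Embedding.coe_subtype]
          exact hpq
        have := SimpleGraph.edist_le (SimpleGraph.Walk.cons hind SimpleGraph.Walk.nil)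
        simpa using this
      have hpupw : (G.induce (s : Set V)).edist pu pw ≤ 1 := hadj pu pw huw
      have hpwpu : (G.induce (s : Set V)).edist pw pu ≤ 1 := hadj pw pu huw.symm
      rcases hs a.1 a.2 with ha | ha <;> rcases hs b.1 b.2 with hb | hb
      · calc (G.induce (s : Set V)).edist a b
            ≤ _ + _ := SimpleGraph.edist_triangle (v := pu)
          _ ≤ 1 + 1 := add_le_add (hadj a pu ha.symm) (hadj pu b hb)
          _ ≤ 3 := by norm_num
      · calc (G.induce (s : Set V)).edist a b
            ≤ _ + _ := SimpleGraph.edist_triangle (v := pu)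
          _ ≤ 1 + (_ + _) := add_le_add (hadj a pu ha.symm) (SimpleGraph.edist_triangle (v := pw))
          _ ≤ 1 + (1 + 1) := add_le_add le_rfl (add_le_add hpupw (hadj pw b hb))
          _ ≤ 3 := by norm_num
      · calc (G.induce (s : Set V)).edist a b
            ≤ _ + _ := SimpleGraph.edist_triangle (v := pw)
          _ ≤ 1 + (_ + _) := add_le_add (hadj a pw ha.symm) (SimpleGraph.edist_triangle (v := pu))
          _ ≤ 1 + (1 + 1) := add_le_add le_rfl (add_le_add hpwpu (hadj pu b hb))
          _ ≤ 3 := by norm_num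
      · calc (G.induce (s : Set V)).edist a b
            ≤ _ + _ := SimpleGraph.edist_triangle (v := pw)
          _ ≤ 1 + 1 := add_le_add (hadj a pw ha.symm) (hadj pw b hb)
          _ ≤ 3 := by norm_num
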